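/- Let G be a pairwise linearly independent joint observable of compatible observables A₁,…,Aₙ (any two elements G(x⃗₁), G(x⃗₂) with x⃗₁ ≠ x⃗₂ are linearly independent). For each ℓ, let Cℓ(G) ⊆ ℝ^{Ωℓ×Ω̃} be the polyhedral cone of solutions u of: ∑_{x⃗} u(x'ℓ,x⃗) G(x⃗) = 0 for all x'ℓ; ∑_{x'ℓ} u(x'ℓ,x⃗) = 0 for all x⃗; u(x'ℓ,x⃗) ≤ 0 if x'ℓ = πℓ(x⃗) and u(x'ℓ,x⃗) ≥ 0 otherwise. Then G is a minimal joint observable if and only if Cℓ(G) = {0} for all ℓ = 1,…,n. -/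

import Mathlib

noncomputable section

open scoped BigOperators

variable {H : Type*} [NormedAddCommGroup H] [InnerProductSpace ℂ H] [CompleteSpace H]

/-- A Markov kernel from `Ω₂` to `Ω₁`: nonnegative entries, columns summing to 1. -/
def IsMarkov {Ω₁ Ω₂ : Type*} [Fintype Ω₁] (p : Ω₁ → Ω₂ → ℝ) : Prop :=
  (∀ x y, 0 ≤ p x y) ∧ ∀ y, ∑ x, p x y = 1

/-- A finite-outcome observable (POVM): positive operators summing to the identity. -/
def IsObservable {Ω : Type*} [Fintype Ω] (A : Ω → H →L[ℂ] H) : Prop :=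
  (∀ x, (A x).IsPositive) ∧ ∑ x, A x = 1

/-- Post-processing of `A` by the kernel `p`. -/
def pproc {Ω₁ Ω₂ : Type*} [Fintype Ω₂] (p : Ω₁ → Ω₂ → ℝ) (A : Ω₂ → H →L[ℂ] H) :
    Ω₁ → H →L[ℂ] H := fun x => ∑ y, (p x y : ℂ) • A y

/-- `A ⪯ B` : `A` is a post-processing of `B`. -/
def PP {Ω₁ Ω₂ : Type*} [Fintype Ω₁] [Fintype Ω₂] (A : Ω₁ → H →L[ℂ] H)
    (B : Ω₂ → H →L[ℂ] H) : Prop := ∃ p, IsMarkov p ∧ A = pproc p B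

/-- `G` is a joint observable of the observables `A ℓ`. -/
def IsJoint {n : ℕ} {Ω : Fin n → Type*} [∀ ℓ, Fintype (Ω ℓ)] [∀ ℓ, DecidableEq (Ω ℓ)]
    (A : ∀ ℓ, Ω ℓ → H →L[ℂ] H) (G : (∀ ℓ, Ω ℓ) → H →L[ℂ] H) : Prop :=
  IsObservable G ∧ ∀ ℓ xℓ, (∑ x : ∀ ℓ, Ω ℓ, if x ℓ = xℓ then G x else 0) = A ℓ xℓ

set_option linter.unusedSectionVars false

open scoped InnerProduct ComplexConjugate
open ContinuousLinearMap

lemma smul_isPositive {c : ℝ} (hc : 0 ≤ c) {T : H →L[ℂ] H} (hT : T.IsPositive) :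
    ((c : ℂ) • T).IsPositive := by
  constructor
  · exact (hT.smul_of_nonneg (Complex.zero_le_real.mpr hc)).1
  · intro x
    rw [reApplyInnerSelf, smul_apply, inner_smul_left]
    simp only [Complex.conj_ofReal]
    rw [RCLike.re_to_complex, Complex.re_ofReal_mul]
    exact mul_nonneg hc (hT.2 x)

lemma exists_re_inner_pos {T : H →L[ℂ] H} (hT : T.IsPositive) (h : T ≠ 0) :
    ∃ ψ : H, 0 < (inner ℂ (T ψ) ψ : ℂ).re := by
  by_contra hc
  push_neg at hc
  apply h
  have h0 : ∀ x : H, (inner ℂ (T x) x : ℂ) = 0 := by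
    intro x
    have hre : (inner ℂ (T x) x : ℂ).re = 0 := le_antisymm (hc x) (hT.2 x)
    have hsa : (inner ℂ x (T x) : ℂ) = inner ℂ (T x) x := by
      rw [← ContinuousLinearMap.adjoint_inner_left, hT.isSelfAdjoint.adjoint_eq]
    have hconj : conj (inner ℂ x (T x) : ℂ) = inner ℂ (T x) x := inner_conj_symm _ _
    rw [hsa] at hconj
    have him := Complex.conj_eq_iff_im.mp hconj
    exact Complex.ext hre him
  have h1 := (inner_map_self_eq_zero (T : H →ₗ[ℂ] H)).mp (fun x => h0 x)
  apply ContinuousLinearMap.coe_injective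
  simpa using h1

lemma lin_sum {ι : Type*} (φ ψ0 : H) (σ : Finset ι) (g : ι → ℝ) (B : ι → H →L[ℂ] H) :
    (inner ℂ ((∑ z ∈ σ, (g z : ℂ) • B z) φ) ψ0 : ℂ).re
      = ∑ z ∈ σ, g z * (inner ℂ (B z φ) ψ0 : ℂ).re := by
  rw [ContinuousLinearMap.sum_apply, sum_inner, Complex.re_sum]
  refine Finset.sum_congr rfl fun z _ => ?_
  rw [ContinuousLinearMap.smul_apply, inner_smul_left, Complex.conj_ofReal,
    Complex.re_ofReal_mul]

lemma markov_fixed_eq_delta {ι : Type*} [Fintype ι] [DecidableEq ι]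
    (K : ι → H →L[ℂ] H) (hpos : ∀ z, (K z).IsPositive)
    (hpli : ∀ x1 x2 : ι, x1 ≠ x2 → LinearIndependent ℂ ![K x1, K x2])
    (t : ι → ι → ℝ) (ht0 : ∀ x z, 0 ≤ t x z) (ht1 : ∀ z, ∑ x, t x z = 1)
    (heq : ∀ x, ∑ z, (t x z : ℂ) • K z = K x) :
    ∀ x z, t x z = if x = z then 1 else 0 := by
  rcases subsingleton_or_nontrivial ι with hsub | hnt
  · intro x z
    have hxz : x = z := Subsingleton.elim x z
    subst hxz
    rw [if_pos rfl]
    have := ht1 x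
    rwa [Fintype.sum_subsingleton _ x] at this
  · -- all K z are nonzero
    have hKne : ∀ z, K z ≠ 0 := by
      intro z
      obtain ⟨b, hb⟩ := exists_ne z
      have h2 := (hpli b z hb).ne_zero 1
      simpa using h2
    -- choose witnesses of positivity
    choose ψ hψ using fun z => exists_re_inner_pos (hpos z) (hKne z)
    set f : (H →L[ℂ] H) → ℝ := fun T => ∑ z', (inner ℂ (T (ψ z')) (ψ z') : ℂ).re with hf
    have hfsum : ∀ (σ : Finset ι) (g : ι → ℝ) (B : ι → H →L[ℂ] H),
        f (∑ z ∈ σ, (g z : ℂ) • B z) = ∑ z ∈ σ, g z * f (B z) := by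
      intro σ g B
      rw [hf]
      simp only [lin_sum]
      rw [Finset.sum_comm]
      refine Finset.sum_congr rfl fun z _ => ?_
      rw [Finset.mul_sum]
    set w : ι → ℝ := fun z => f (K z) with hwdef
    have hw : ∀ z, 0 < w z := by
      intro z
      have : ∀ z' ∈ (Finset.univ : Finset ι), 0 ≤ (inner ℂ ((K z) (ψ z')) (ψ z') : ℂ).re := by
        intro z' _
        have := (hpos z).re_inner_nonneg_left (ψ z')
        simpa using this
      exact Finset.sum_pos' this ⟨z, Finset.mem_univ z, hψ z⟩
    -- separating vectors for pairs
    have hD : ∀ a b : ι, a ≠ b → ((w b : ℂ) • K a - (w a : ℂ) • K b) ≠ 0 := by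
      intro a b hab h0
      have hEq : K a = ((w a / w b : ℝ) : ℂ) • K b := by
        have h1 : (w b : ℂ) • K a = (w a : ℂ) • K b := by
          rwa [sub_eq_zero] at h0
        have hbne : ((w b : ℝ) : ℂ) ≠ 0 := by
          exact_mod_cast (hw b).ne'
        rw [Complex.ofReal_div, div_eq_mul_inv, mul_comm, mul_smul, ← h1, ← mul_smul,
          inv_mul_cancel₀ hbne, one_smul]
      have h2 := (linearIndependent_fin2.mp (hpli a b hab)).2 ((w a / w b : ℝ) : ℂ)
      simp only [Matrix.cons_val_one, Matrix.head_cons, Matrix.cons_val_zero] at h2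
      exact h2 hEq.symm
    have hsep : ∀ a b : ι, a ≠ b → ∃ φ ψ0 : H,
        (inner ℂ (((w b : ℂ) • K a - (w a : ℂ) • K b) φ) ψ0 : ℂ).re ≠ 0 := by
      intro a b hab
      obtain ⟨φ, hφ⟩ : ∃ φ : H, ((w b : ℂ) • K a - (w a : ℂ) • K b) φ ≠ 0 := by
        by_contra hall
        push_neg at hall
        exact hD a b hab (ContinuousLinearMap.ext fun φ => by simpa using hall φ)
      refine ⟨φ, ((w b : ℂ) • K a - (w a : ℂ) • K b) φ, ?_⟩
      have : (inner ℂ (((w b : ℂ) • K a - (w a : ℂ) • K b) φ)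
          (((w b : ℂ) • K a - (w a : ℂ) • K b) φ) : ℂ).re
          = ‖((w b : ℂ) • K a - (w a : ℂ) • K b) φ‖ ^ 2 := by
        rw [← RCLike.re_to_complex]
        exact inner_self_eq_norm_sq _
      rw [this]
      exact (pow_pos (norm_pos_iff.mpr hφ) 2).ne'
    have hsep' : ∀ c : ι × ι, ∃ φ ψ0 : H, c.1 ≠ c.2 →
        (inner ℂ (((w c.2 : ℂ) • K c.1 - (w c.1 : ℂ) • K c.2) φ) ψ0 : ℂ).re ≠ 0 := by
      intro c
      by_cases h : c.1 = c.2
      · exact ⟨0, 0, fun hc => absurd h hc⟩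
      · obtain ⟨φ, ψ0, hφψ⟩ := hsep c.1 c.2 h
        exact ⟨φ, ψ0, fun _ => hφψ⟩
    choose Φ Ψ hΦΨ using hsep'
    set hh : ι × ι → ι → ℝ := fun c z => (inner ℂ ((K z) (Φ c)) (Ψ c) : ℂ).re / w z with hhh
    set F : ι → ℝ := fun z => ∑ c : ι × ι, (hh c z) ^ 2 with hF
    have hsep2 : ∀ a b : ι, a ≠ b → hh (a, b) a ≠ hh (a, b) b := by
      intro a b hab
      have h1 := hΦΨ (a, b) hab
      have h2 : (inner ℂ (((w b : ℂ) • K a - (w a : ℂ) • K b) (Φ (a, b))) (Ψ (a, b)) : ℂ).re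
          = w b * (inner ℂ ((K a) (Φ (a, b))) (Ψ (a, b)) : ℂ).re
            - w a * (inner ℂ ((K b) (Φ (a, b))) (Ψ (a, b)) : ℂ).re := by
        rw [ContinuousLinearMap.sub_apply, ContinuousLinearMap.smul_apply,
          ContinuousLinearMap.smul_apply, inner_sub_left, inner_smul_left, inner_smul_left,
          Complex.conj_ofReal, Complex.conj_ofReal, Complex.sub_re, Complex.re_ofReal_mul,
          Complex.re_ofReal_mul]
      rw [h2] at h1
      intro hcon
      apply h1
      rw [hhh] at hcon
      simp only at hcon
      rw [div_eq_div_iff (hw a).ne' (hw b).ne'] at hcon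
      linarith [hcon]
    -- main induction
    have main : ∀ s : Finset ι,
        (∀ z ∈ s, ∑ x ∈ s, t x z = 1) →
        (∀ x ∈ s, ∑ z ∈ s, (t x z : ℂ) • K z = K x) →
        ∀ x ∈ s, ∀ z ∈ s, t x z = if x = z then 1 else 0 := by
      intro s
      induction s using Finset.strongInduction with
      | _ s ih =>
        intro hcol heqs x hx z hz
        have hsne : s.Nonempty := ⟨x, hx⟩
        obtain ⟨e, he, hemax⟩ := Finset.exists_max_image s F hsne
        have hwe : w e = ∑ z' ∈ s, t e z' * w z' := by
          have h := congrArg f (heqs e he)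
          rw [hfsum] at h
          exact h.symm
        set lam : ι → ℝ := fun z' => t e z' * w z' / w e with hlam
        have hlamnn : ∀ z' ∈ s, 0 ≤ lam z' := fun z' _ =>
          div_nonneg (mul_nonneg (ht0 e z') (hw z').le) (hw e).le
        have hlam1 : ∑ z' ∈ s, lam z' = 1 := by
          rw [hlam]
          simp only
          rw [← Finset.sum_div, ← hwe, div_self (hw e).ne']
        have hhe : ∀ c : ι × ι, hh c e = ∑ z' ∈ s, lam z' * hh c z' := by
          intro c
          have h1 : (inner ℂ ((K e) (Φ c)) (Ψ c) : ℂ).re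
              = ∑ z' ∈ s, t e z' * (inner ℂ ((K z') (Φ c)) (Ψ c) : ℂ).re := by
            conv_lhs => rw [← heqs e he]
            exact lin_sum _ _ _ _ _
          rw [hhh]
          simp only
          rw [h1, Finset.sum_div]
          refine Finset.sum_congr rfl fun z' _ => ?_
          rw [hlam]
          simp only
          have hz'ne : w z' ≠ 0 := (hw z').ne'
          field_simp
        have key : ∑ z' ∈ s, lam z' * (∑ c : ι × ι, (hh c z' - hh c e) ^ 2)
            = (∑ z' ∈ s, lam z' * F z') - F e := by
          have swap1 : ∑ z' ∈ s, lam z' * (∑ c : ι × ι, (hh c z' - hh c e) ^ 2)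
              = ∑ c : ι × ι, ∑ z' ∈ s, lam z' * (hh c z' - hh c e) ^ 2 := by
            simp_rw [Finset.mul_sum]
            exact Finset.sum_comm
          have perc : ∀ c : ι × ι, ∑ z' ∈ s, lam z' * (hh c z' - hh c e) ^ 2
              = (∑ z' ∈ s, lam z' * (hh c z') ^ 2) - (hh c e) ^ 2 := by
            intro c
            have expand : ∀ z' ∈ s, lam z' * (hh c z' - hh c e) ^ 2
                = lam z' * (hh c z') ^ 2 - 2 * hh c e * (lam z' * hh c z')
                  + (hh c e) ^ 2 * lam z' := fun z' _ => by ring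
            rw [Finset.sum_congr rfl expand, Finset.sum_add_distrib, Finset.sum_sub_distrib,
              ← Finset.mul_sum, ← Finset.mul_sum, ← hhe c, hlam1]
            ring
          rw [swap1, Finset.sum_congr rfl (fun c _ => perc c), Finset.sum_sub_distrib]
          congr 1
          rw [Finset.sum_comm]
          refine Finset.sum_congr rfl fun z' _ => ?_
          rw [hF]
          simp only
          rw [Finset.mul_sum]
        have hle : ∑ z' ∈ s, lam z' * F z' ≤ F e := by
          calc ∑ z' ∈ s, lam z' * F z' ≤ ∑ z' ∈ s, lam z' * F e :=
                Finset.sum_le_sum fun z' hz' =>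
                  mul_le_mul_of_nonneg_left (hemax z' hz') (hlamnn z' hz')
            _ = F e := by rw [← Finset.sum_mul, hlam1, one_mul]
        have hnnterm : ∀ z' ∈ s, 0 ≤ lam z' * (∑ c : ι × ι, (hh c z' - hh c e) ^ 2) :=
          fun z' hz' => mul_nonneg (hlamnn z' hz')
            (Finset.sum_nonneg fun c _ => sq_nonneg _)
        have hzero : ∀ z' ∈ s, lam z' * (∑ c : ι × ι, (hh c z' - hh c e) ^ 2) = 0 := by
          have hsum0 : ∑ z' ∈ s, lam z' * (∑ c : ι × ι, (hh c z' - hh c e) ^ 2) ≤ 0 := by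
            rw [key]; linarith
          have := le_antisymm hsum0 (Finset.sum_nonneg hnnterm)
          exact fun z' hz' => (Finset.sum_eq_zero_iff_of_nonneg hnnterm).mp this z' hz'
        have hrow : ∀ z' ∈ s, z' ≠ e → t e z' = 0 := by
          intro z' hz' hne
          by_contra hne2
          have hlp : 0 < lam z' :=
            div_pos (mul_pos (lt_of_le_of_ne (ht0 e z') (Ne.symm hne2)) (hw z')) (hw e)
          have h2 : ∑ c : ι × ι, (hh c z' - hh c e) ^ 2 = 0 := by
            rcases mul_eq_zero.mp (hzero z' hz') with h | h
            · exact absurd h hlp.ne'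
            · exact h
          have h3 : (hh (z', e) z' - hh (z', e) e) ^ 2 = 0 :=
            (Finset.sum_eq_zero_iff_of_nonneg fun c _ => sq_nonneg _).mp h2 (z', e)
              (Finset.mem_univ _)
          have h4 : hh (z', e) z' = hh (z', e) e := by
            have := pow_eq_zero_iff (n := 2) (by norm_num) |>.mp h3
            linarith [this]
          exact hsep2 z' e hne h4
        have htee : t e e = 1 := by
          have hlame : lam e = 1 := by
            rw [← hlam1]
            refine (Finset.sum_eq_single_of_mem e he fun z' hz' hne => ?_).symm
            rw [hlam]
            simp only
            rw [hrow z' hz' hne]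
            ring
          rw [hlam] at hlame
          simp only at hlame
          rw [mul_div_assoc, div_self (hw e).ne', mul_one] at hlame
          exact hlame
        have hcole : ∀ x' ∈ s, x' ≠ e → t x' e = 0 := by
          have h1 : ∑ x' ∈ s, t x' e = 1 := hcol e he
          rw [← Finset.add_sum_erase s _ he, htee] at h1
          have h2 : ∑ x' ∈ s.erase e, t x' e = 0 := by linarith
          intro x' hx' hne
          exact (Finset.sum_eq_zero_iff_of_nonneg fun y _ => ht0 y e).mp h2 x'
            (Finset.mem_erase.mpr ⟨hne, hx'⟩)
        by_cases hxe : x = e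
        · by_cases hze : z = e
          · rw [hxe, hze, if_pos rfl]
            exact htee
          · have hxz : x ≠ z := fun h => hze (h.symm.trans hxe)
            rw [if_neg hxz, hxe]
            exact hrow z hz hze
        · by_cases hze : z = e
          · have hxz : x ≠ z := fun h => hxe (h.trans hze)
            rw [if_neg hxz, hze]
            exact hcole x hx hxe
          · have hss : s.erase e ⊂ s := Finset.erase_ssubset he
            have hcol' : ∀ z' ∈ s.erase e, ∑ x' ∈ s.erase e, t x' z' = 1 := by
              intro z' hz'
              obtain ⟨hne, hmem⟩ := Finset.mem_erase.mp hz'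
              have h := hcol z' hmem
              rw [← Finset.add_sum_erase s _ he, hrow z' hmem hne] at h
              linarith
            have heqs' : ∀ x' ∈ s.erase e, ∑ z' ∈ s.erase e, (t x' z' : ℂ) • K z' = K x' := by
              intro x' hx'
              obtain ⟨hne, hmem⟩ := Finset.mem_erase.mp hx'
              have h := heqs x' hmem
              rw [← Finset.add_sum_erase s _ he, hcole x' hmem hne] at h
              simpa using h
            exact ih _ hss hcol' heqs' x (Finset.mem_erase.mpr ⟨hxe, hx⟩) z
              (Finset.mem_erase.mpr ⟨hze, hz⟩)
    intro x z
    exact main Finset.univ (fun z' _ => ht1 z') (fun x' _ => heq x') x (Finset.mem_univ x) z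
      (Finset.mem_univ z)

lemma sum_ite_cast_smul {ι : Type*} [Fintype ι] {κ : Type*} [Fintype κ]
    (p : κ → ι → ℝ) (P : κ → Prop) [DecidablePred P] (B : ι → H →L[ℂ] H) :
    ∑ x, ((∑ y, if P y then p y x else 0 : ℝ) : ℂ) • B x
      = ∑ y, if P y then (∑ x, (p y x : ℂ) • B x) else 0 := by
  have h1 : ∀ x, ((∑ y, if P y then p y x else 0 : ℝ) : ℂ) • B x
      = ∑ y, if P y then (p y x : ℂ) • B x else 0 := by
    intro x
    rw [Complex.ofReal_sum, Finset.sum_smul]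
    refine Finset.sum_congr rfl fun y _ => ?_
    by_cases h : P y <;> simp [h]
  rw [Finset.sum_congr rfl fun x _ => h1 x, Finset.sum_comm]
  refine Finset.sum_congr rfl fun y _ => ?_
  by_cases h : P y <;> simp [h]

lemma marg_ite_smul {n : ℕ} {Ω : Fin n → Type*} [∀ ℓ, Fintype (Ω ℓ)] [∀ ℓ, DecidableEq (Ω ℓ)]
    (G : (∀ ℓ, Ω ℓ) → H →L[ℂ] H) (m : Fin n) (a : Ω m) :
    ∑ x, ((if x m = a then (1 : ℝ) else 0 : ℝ) : ℂ) • G x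
      = ∑ x : ∀ ℓ, Ω ℓ, if x m = a then G x else 0 := by
  refine Finset.sum_congr rfl fun x _ => ?_
  by_cases h : x m = a <;> simp [h]

lemma mpr_direction {n : ℕ} {Ω : Fin n → Type*} [∀ ℓ, Fintype (Ω ℓ)] [∀ ℓ, DecidableEq (Ω ℓ)]
    (A : ∀ ℓ, Ω ℓ → H →L[ℂ] H) (G : (∀ ℓ, Ω ℓ) → H →L[ℂ] H) (hG : IsJoint A G)
    (hC : ∀ (ℓ : Fin n) (u : Ω ℓ → (∀ ℓ, Ω ℓ) → ℝ),
      (∀ x' : Ω ℓ, ∑ x : ∀ ℓ, Ω ℓ, (u x' x : ℂ) • G x = 0) →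
      (∀ x : ∀ ℓ, Ω ℓ, ∑ x' : Ω ℓ, u x' x = 0) →
      (∀ (x' : Ω ℓ) (x : ∀ ℓ, Ω ℓ),
        (x' = x ℓ → u x' x ≤ 0) ∧ (x' ≠ x ℓ → 0 ≤ u x' x)) →
      u = 0) :
    ∀ G' : (∀ ℓ, Ω ℓ) → H →L[ℂ] H, IsJoint A G' → PP G' G → PP G G' := by
  classical
  rintro G' hG' ⟨p, hp, hpe⟩
  have hGy' : ∀ y, G' y = ∑ x, (p y x : ℂ) • G x := fun y => by rw [hpe]; rfl
  have hmarg : ∀ (ℓ : Fin n) (x' : Ω ℓ) (x : ∀ ℓ, Ω ℓ),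
      (∑ y, if y ℓ = x' then p y x else 0) = if x ℓ = x' then 1 else 0 := by
    intro ℓ
    have hu := hC ℓ (fun x' x =>
      (∑ y, if y ℓ = x' then p y x else 0) - (if x ℓ = x' then 1 else 0)) ?_ ?_ ?_
    · intro x' x
      have h := congrFun (congrFun hu x') x
      simp only [Pi.zero_apply] at h
      linarith [h]
    · -- cone condition 1
      intro x'
      simp only [Complex.ofReal_sub, sub_smul, Finset.sum_sub_distrib]
      rw [sub_eq_zero]
      have hl : ∑ x, ((∑ y, if y ℓ = x' then p y x else 0 : ℝ) : ℂ) • G x = A ℓ x' := by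
        rw [sum_ite_cast_smul p (fun y => y ℓ = x') G]
        rw [← hG'.2 ℓ x']
        refine Finset.sum_congr rfl fun y _ => ?_
        by_cases h : y ℓ = x' <;> simp [h, hGy']
      have hr : ∑ x, ((if x ℓ = x' then (1:ℝ) else 0 : ℝ) : ℂ) • G x = A ℓ x' := by
        rw [marg_ite_smul G ℓ x', hG.2 ℓ x']
      rw [hl]
      exact hr.symm
    · -- cone condition 2
      intro x
      show ∑ x' : Ω ℓ, ((∑ y, if y ℓ = x' then p y x else 0) - (if x ℓ = x' then 1 else 0)) = 0
      rw [Finset.sum_sub_distrib]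
      have hA : ∑ x' : Ω ℓ, ∑ y, (if y ℓ = x' then p y x else 0) = 1 := by
        rw [Finset.sum_comm]
        have h1 : ∀ y, (∑ x' : Ω ℓ, if y ℓ = x' then p y x else 0) = p y x := fun y => by
          rw [Finset.sum_ite_eq]; simp
        rw [Finset.sum_congr rfl fun y _ => h1 y, hp.2 x]
      have hB : (∑ x' : Ω ℓ, if x ℓ = x' then (1:ℝ) else 0) = 1 := by
        rw [Finset.sum_ite_eq]; simp
      rw [hA, hB, sub_self]
    · -- cone condition 3
      intro x' x
      constructor
      · intro h
        show (∑ y, if y ℓ = x' then p y x else 0) - (if x ℓ = x' then 1 else 0) ≤ 0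
        have hle : (∑ y, if y ℓ = x' then p y x else 0) ≤ ∑ y, p y x :=
          Finset.sum_le_sum fun y _ => by
            by_cases hc : y ℓ = x' <;> simp [hc, hp.1 y x]
        rw [hp.2 x] at hle
        rw [if_pos h.symm]
        linarith
      · intro h
        show (0:ℝ) ≤ (∑ y, if y ℓ = x' then p y x else 0) - (if x ℓ = x' then 1 else 0)
        rw [if_neg (fun hc => h (hc.symm))]
        have : (0:ℝ) ≤ ∑ y, if y ℓ = x' then p y x else 0 :=
          Finset.sum_nonneg fun y _ => by
            by_cases hc : y ℓ = x' <;> simp [hc, hp.1 y x]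
        linarith
  have hoff : ∀ y x, y ≠ x → p y x = 0 := by
    intro y x hyx
    obtain ⟨ℓ, hℓ⟩ := Function.ne_iff.mp hyx
    have h0 := hmarg ℓ (y ℓ) x
    rw [if_neg (fun hc => hℓ hc.symm)] at h0
    have hle : p y x ≤ ∑ y', if y' ℓ = y ℓ then p y' x else 0 := by
      have := Finset.single_le_sum (f := fun y' => if y' ℓ = y ℓ then p y' x else 0)
        (fun y' _ => by by_cases hc : y' ℓ = y ℓ <;> simp [hc, hp.1 y' x])
        (Finset.mem_univ y)
      simpa using this
    rw [h0] at hle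
    exact le_antisymm hle (hp.1 y x)
  have hG'G : G' = G := by
    funext y
    rw [hGy' y, Finset.sum_eq_single y
      (fun x _ hxy => by rw [hoff y x (fun h => hxy h.symm)]; simp)
      (fun h => absurd (Finset.mem_univ y) h)]
    have hdiag : p y y = 1 := by
      have hcol := hp.2 y
      rw [Finset.sum_eq_single y (fun y' _ hy' => hoff y' y hy')
        (fun h => absurd (Finset.mem_univ y) h)] at hcol
      exact hcol
    rw [hdiag]
    simp
  refine ⟨fun a b => if a = b then 1 else 0, ⟨fun a b => by positivity, fun b => by simp⟩, ?_⟩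
  funext a
  rw [pproc]
  simp only [apply_ite Complex.ofReal, Complex.ofReal_one, Complex.ofReal_zero, ite_smul,
    one_smul, zero_smul]
  rw [Finset.sum_ite_eq _ a fun b => G' b]
  simp [hG'G]

lemma mp_direction {n : ℕ} {Ω : Fin n → Type*} [∀ ℓ, Fintype (Ω ℓ)] [∀ ℓ, DecidableEq (Ω ℓ)]
    (A : ∀ ℓ, Ω ℓ → H →L[ℂ] H) (G : (∀ ℓ, Ω ℓ) → H →L[ℂ] H) (hG : IsJoint A G)
    (hpli : ∀ x1 x2 : ∀ ℓ, Ω ℓ, x1 ≠ x2 → LinearIndependent ℂ ![G x1, G x2])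
    (hmin : ∀ G' : (∀ ℓ, Ω ℓ) → H →L[ℂ] H, IsJoint A G' → PP G' G → PP G G')
    (ℓ : Fin n) (u : Ω ℓ → (∀ ℓ, Ω ℓ) → ℝ)
    (h1 : ∀ x' : Ω ℓ, ∑ x : ∀ ℓ, Ω ℓ, (u x' x : ℂ) • G x = 0)
    (h2 : ∀ x : ∀ ℓ, Ω ℓ, ∑ x' : Ω ℓ, u x' x = 0)
    (h3 : ∀ (x' : Ω ℓ) (x : ∀ ℓ, Ω ℓ),
      (x' = x ℓ → u x' x ≤ 0) ∧ (x' ≠ x ℓ → 0 ≤ u x' x)) :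
    u = 0 := by
  classical
  set M : ℝ := ∑ x' : Ω ℓ, ∑ x, |u x' x| with hM
  have hM0 : 0 ≤ M :=
    Finset.sum_nonneg fun x' _ => Finset.sum_nonneg fun x _ => abs_nonneg _
  have hMb : ∀ x' x, |u x' x| ≤ M := by
    intro x' x
    calc |u x' x| ≤ ∑ x'', |u x' x''| :=
          Finset.single_le_sum (f := fun x'' => |u x' x''|)
            (fun _ _ => abs_nonneg _) (Finset.mem_univ x)
      _ ≤ M := Finset.single_le_sum (f := fun x'' => ∑ x0, |u x'' x0|)
          (fun _ _ => Finset.sum_nonneg fun _ _ => abs_nonneg _) (Finset.mem_univ x')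
  set ε : ℝ := (1 + M)⁻¹ with hεd
  have hε : 0 < ε := inv_pos.mpr (by linarith)
  have hbound : ∀ x' x, |ε * u x' x| < 1 := by
    intro x' x
    rw [abs_mul, abs_of_pos hε]
    calc ε * |u x' x| ≤ ε * M := mul_le_mul_of_nonneg_left (hMb x' x) hε.le
      _ < ε * (1 + M) := by
          apply mul_lt_mul_of_pos_left _ hε
          linarith
      _ = 1 := inv_mul_cancel₀ (by linarith)
  set q : Ω ℓ → (∀ m, Ω m) → ℝ :=
    fun x' x => (if x' = x ℓ then 1 else 0) + ε * u x' x with hqd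
  have hq0 : ∀ x' x, 0 ≤ q x' x := by
    intro x' x
    show 0 ≤ (if x' = x ℓ then 1 else 0) + ε * u x' x
    by_cases hc : x' = x ℓ
    · rw [if_pos hc]
      have := (abs_lt.mp (hbound x' x)).1
      linarith
    · rw [if_neg hc]
      have := mul_nonneg hε.le ((h3 x' x).2 hc)
      linarith
  have hqdiag : ∀ x' x, x' = x ℓ → 0 < q x' x := by
    intro x' x hc
    show 0 < (if x' = x ℓ then 1 else 0) + ε * u x' x
    rw [if_pos hc]
    have := (abs_lt.mp (hbound x' x)).1
    linarith
  have hq1 : ∀ x, ∑ x', q x' x = 1 := by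
    intro x
    show ∑ x' : Ω ℓ, ((if x' = x ℓ then 1 else 0) + ε * u x' x) = 1
    rw [Finset.sum_add_distrib, ← Finset.mul_sum, h2 x, mul_zero, add_zero]
    rw [Finset.sum_ite_eq' _ (x ℓ) (fun _ => (1:ℝ))]
    simp
  set p : (∀ m, Ω m) → (∀ m, Ω m) → ℝ :=
    fun y x => if y = Function.update x ℓ (y ℓ) then q (y ℓ) x else 0 with hpd
  have hpnn : ∀ y x, 0 ≤ p y x := by
    intro y x
    show 0 ≤ (if y = Function.update x ℓ (y ℓ) then q (y ℓ) x else 0)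
    by_cases hc : y = Function.update x ℓ (y ℓ)
    · rw [if_pos hc]; exact hq0 _ _
    · rw [if_neg hc]
  have hpexp : ∀ y x, p y x = ∑ x' : Ω ℓ,
      if y = Function.update x ℓ x' then q x' x else 0 := by
    intro y x
    by_cases hy : y = Function.update x ℓ (y ℓ)
    · show (if y = Function.update x ℓ (y ℓ) then q (y ℓ) x else 0) = _
      rw [if_pos hy]
      rw [Finset.sum_eq_single (y ℓ)]
      · rw [if_pos hy]
      · intro x' _ hne
        rw [if_neg]
        intro hcon
        apply hne
        rw [hcon, Function.update_self]
      · intro hmem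
        exact absurd (Finset.mem_univ (y ℓ)) hmem
    · show (if y = Function.update x ℓ (y ℓ) then q (y ℓ) x else 0) = _
      rw [if_neg hy]
      symm
      refine Finset.sum_eq_zero fun x' _ => ?_
      rw [if_neg]
      intro hcon
      apply hy
      have : y ℓ = x' := by rw [hcon, Function.update_self]
      rw [this, ← hcon]
  have hpcol : ∀ x, ∑ y, p y x = 1 := by
    intro x
    rw [Finset.sum_congr rfl fun y _ => hpexp y x, Finset.sum_comm]
    rw [← hq1 x]
    refine Finset.sum_congr rfl fun x' _ => ?_
    rw [Finset.sum_ite_eq' _ (Function.update x ℓ x') (fun _ => q x' x)]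
    simp
  have hpl : ∀ (a : Ω ℓ) x, (∑ y, if y ℓ = a then p y x else 0) = q a x := by
    intro a x
    have hterm : ∀ y, (if y ℓ = a then p y x else 0)
        = if y = Function.update x ℓ a then q a x else 0 := by
      intro y
      by_cases hy2 : y = Function.update x ℓ a
      · have hyl : y ℓ = a := by rw [hy2, Function.update_self]
        rw [if_pos hyl, if_pos hy2]
        show (if y = Function.update x ℓ (y ℓ) then q (y ℓ) x else 0) = q a x
        rw [hyl, if_pos hy2]
      · rw [if_neg hy2]
        by_cases hya : y ℓ = a
        · rw [if_pos hya]
          show (if y = Function.update x ℓ (y ℓ) then q (y ℓ) x else 0) = 0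
          rw [if_neg]
          intro hcon
          apply hy2
          rw [hcon, hya]
        · rw [if_neg hya]
    rw [Finset.sum_congr rfl fun y _ => hterm y]
    rw [Finset.sum_ite_eq' _ (Function.update x ℓ a) (fun _ => q a x)]
    simp
  have hpm : ∀ (m : Fin n) (a : Ω m) x, m ≠ ℓ →
      (∑ y, if y m = a then p y x else 0) = if x m = a then 1 else 0 := by
    intro m a x hm
    have hterm : ∀ y, (if y m = a then p y x else 0) = if x m = a then p y x else 0 := by
      intro y
      by_cases hy : y = Function.update x ℓ (y ℓ)
      · have hym : y m = x m := by
          conv_lhs => rw [hy]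
          exact Function.update_of_ne hm _ _
        rw [hym]
      · have hp0 : p y x = 0 := by
          show (if y = Function.update x ℓ (y ℓ) then q (y ℓ) x else 0) = 0
          rw [if_neg hy]
        rw [hp0]
        by_cases hc1 : y m = a <;> by_cases hc2 : x m = a <;> simp [hc1, hc2]
    rw [Finset.sum_congr rfl fun y _ => hterm y]
    by_cases hc : x m = a <;> simp [hc, hpcol x]
  set G' : (∀ m, Ω m) → H →L[ℂ] H := pproc p G with hG'd
  have hG'y : ∀ y, G' y = ∑ x, (p y x : ℂ) • G x := fun y => rfl
  have hG'joint : IsJoint A G' := by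
    refine ⟨⟨fun y => ?_, ?_⟩, ?_⟩
    · rw [hG'y y]
      refine Finset.sum_induction _ ContinuousLinearMap.IsPositive
        (fun a b ha hb => ha.add hb) ContinuousLinearMap.isPositive_zero
        (fun x _ => smul_isPositive (hpnn y x) (hG.1.1 x))
    · rw [Finset.sum_congr rfl fun y _ => hG'y y, Finset.sum_comm]
      rw [← hG.1.2]
      refine Finset.sum_congr rfl fun x _ => ?_
      rw [← Finset.sum_smul, ← Complex.ofReal_sum, hpcol x]
      simp
    · intro m a
      have e1 : ∑ y, (if y m = a then G' y else 0)
          = ∑ x, ((∑ y, if y m = a then p y x else 0 : ℝ) : ℂ) • G x := by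
        rw [sum_ite_cast_smul p (fun y => y m = a) G]
        refine Finset.sum_congr rfl fun y _ => ?_
        by_cases h : y m = a <;> simp [h, hG'y]
      rcases eq_or_ne m ℓ with hm | hm
      · subst hm
        rw [e1]
        rw [Finset.sum_congr rfl fun x _ => by rw [hpl a x]]
        have e2 : ∀ x : ∀ m0, Ω m0, ((q a x : ℝ) : ℂ) • G x
            = ((if x m = a then (1:ℝ) else 0 : ℝ) : ℂ) • G x
              + (ε : ℂ) • ((u a x : ℂ) • G x) := by
          intro x
          have hqx : q a x = (if x m = a then (1:ℝ) else 0) + ε * u a x := by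
            show (if a = x m then 1 else 0) + ε * u a x = _
            by_cases hc : a = x m
            · rw [if_pos hc, if_pos hc.symm]
            · rw [if_neg hc, if_neg fun hcc => hc hcc.symm]
          rw [hqx]
          push_cast
          rw [add_smul, mul_smul]
        rw [Finset.sum_congr rfl fun x _ => e2 x, Finset.sum_add_distrib,
          ← Finset.smul_sum, h1 a, smul_zero, add_zero, marg_ite_smul G m a,
          hG.2 m a]
      · rw [e1]
        rw [Finset.sum_congr rfl fun x _ => by rw [hpm m a x hm], marg_ite_smul G m a,
          hG.2 m a]
  obtain ⟨r, hr, hre⟩ := hmin G' hG'joint ⟨p, ⟨hpnn, hpcol⟩, rfl⟩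
  set t : (∀ m, Ω m) → (∀ m, Ω m) → ℝ := fun x z => ∑ y, r x y * p y z with htd
  have ht0 : ∀ x z, 0 ≤ t x z :=
    fun x z => Finset.sum_nonneg fun y _ => mul_nonneg (hr.1 x y) (hpnn y z)
  have ht1 : ∀ z, ∑ x, t x z = 1 := by
    intro z
    rw [htd]
    simp only
    rw [Finset.sum_comm]
    rw [Finset.sum_congr rfl fun y _ => by rw [← Finset.sum_mul, hr.2 y, one_mul]]
    exact hpcol z
  have heqt : ∀ x, ∑ z, (t x z : ℂ) • G z = G x := by
    intro x
    have hx : G x = ∑ y, (r x y : ℂ) • G' y := by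
      conv_lhs => rw [hre]
      rfl
    have hx2 : ∀ y : ∀ m, Ω m, (r x y : ℂ) • G' y
        = ∑ z, ((r x y * p y z : ℝ) : ℂ) • G z := by
      intro y
      rw [hG'y y, Finset.smul_sum]
      refine Finset.sum_congr rfl fun z _ => ?_
      rw [smul_smul, ← Complex.ofReal_mul]
    have hx3 : ∑ y, (r x y : ℂ) • G' y
        = ∑ z, ∑ y, ((r x y * p y z : ℝ) : ℂ) • G z := by
      rw [Finset.sum_congr rfl fun y _ => hx2 y]
      exact Finset.sum_comm
    rw [hx, hx3]
    refine Finset.sum_congr rfl fun z _ => ?_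
    rw [← Finset.sum_smul, ← Complex.ofReal_sum]
  have hdelta := markov_fixed_eq_delta G hG.1.1 hpli t ht0 ht1 heqt
  have huniq : ∀ y z z', 0 < p y z → 0 < p y z' → z = z' := by
    intro y z z' hz hz'
    by_contra hne
    have hrcol : ∀ x z0, 0 < p y z0 → x ≠ z0 → r x y = 0 := by
      intro x z0 hp0 hx
      have htx : t x z0 = 0 := by rw [hdelta x z0, if_neg hx]
      have hle : r x y * p y z0 ≤ t x z0 := by
        rw [htd]
        exact Finset.single_le_sum (f := fun y0 => r x y0 * p y0 z0)
          (fun y0 _ => mul_nonneg (hr.1 x y0) (hpnn y0 z0)) (Finset.mem_univ y)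
      have hge : 0 ≤ r x y * p y z0 := mul_nonneg (hr.1 x y) (hpnn y z0)
      have : r x y * p y z0 = 0 := le_antisymm (htx ▸ hle) hge
      rcases mul_eq_zero.mp this with h | h
      · exact h
      · exact absurd h hp0.ne'
    have hall : ∀ x, r x y = 0 := by
      intro x
      by_cases hxz : x = z
      · exact hrcol x z' hz' (fun hc => hne (hxz ▸ hc))
      · exact hrcol x z hz hxz
    have := hr.2 y
    rw [Finset.sum_congr rfl fun x _ => hall x, Finset.sum_const, smul_zero] at this
    exact absurd this (by norm_num)
  have hoff : ∀ (x' : Ω ℓ) x, x' ≠ x ℓ → u x' x = 0 := by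
    intro x' x hx'
    set y := Function.update x ℓ x' with hyd
    have hyl : y ℓ = x' := Function.update_self ℓ x' x
    have hpyx : p y x = q x' x := by
      show (if y = Function.update x ℓ (y ℓ) then q (y ℓ) x else 0) = q x' x
      rw [hyl, if_pos rfl]
    have hpyy : 0 < p y y := by
      show 0 < (if y = Function.update y ℓ (y ℓ) then q (y ℓ) y else 0)
      rw [Function.update_eq_self, if_pos rfl]
      exact hqdiag (y ℓ) y rfl
    have hyx : y ≠ x := fun h => hx' (by rw [← hyl, h])
    by_contra hu0
    have hqpos : 0 < q x' x := by
      refine lt_of_le_of_ne (hq0 x' x) fun hc => ?_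
      have hq' : q x' x = ε * u x' x := by
        show (if x' = x ℓ then 1 else 0) + ε * u x' x = ε * u x' x
        rw [if_neg hx', zero_add]
      rw [hq'] at hc
      rcases mul_eq_zero.mp hc.symm with h | h
      · exact absurd h hε.ne'
      · exact hu0 h
    have : x = y := huniq y x y (hpyx ▸ hqpos) hpyy
    exact hyx this.symm
  funext x' x
  show u x' x = 0
  by_cases hc : x' = x ℓ
  · have hs := h2 x
    rw [Finset.sum_eq_single_of_mem (x ℓ) (Finset.mem_univ _)
      (fun x'' _ hne => hoff x'' x hne)] at hs
    rw [hc]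
    exact hs
  · exact hoff x' x hc

/-- For a pairwise linearly independent joint observable `G`, minimality is equivalent
to the vanishing of the polyhedral cones `Cℓ(G)`. -/
theorem minimal_iff_cones_trivial {n : ℕ} {Ω : Fin n → Type*}
    [∀ ℓ, Fintype (Ω ℓ)] [∀ ℓ, DecidableEq (Ω ℓ)]
    (A : ∀ ℓ, Ω ℓ → H →L[ℂ] H) (G : (∀ ℓ, Ω ℓ) → H →L[ℂ] H)
    (hG : IsJoint A G)
    (hpli : ∀ x1 x2 : ∀ ℓ, Ω ℓ, x1 ≠ x2 → LinearIndependent ℂ ![G x1, G x2]) :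
    (∀ G' : (∀ ℓ, Ω ℓ) → H →L[ℂ] H, IsJoint A G' → PP G' G → PP G G') ↔
    ∀ (ℓ : Fin n) (u : Ω ℓ → (∀ ℓ, Ω ℓ) → ℝ),
      (∀ x' : Ω ℓ, ∑ x : ∀ ℓ, Ω ℓ, (u x' x : ℂ) • G x = 0) →
      (∀ x : ∀ ℓ, Ω ℓ, ∑ x' : Ω ℓ, u x' x = 0) →
      (∀ (x' : Ω ℓ) (x : ∀ ℓ, Ω ℓ),
        (x' = x ℓ → u x' x ≤ 0) ∧ (x' ≠ x ℓ → 0 ≤ u x' x)) →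
      u = 0 := by
  constructor
  · intro hmin ℓ u h1 h2 h3
    exact mp_direction A G hG hpli hmin ℓ u h1 h2 h3
  · intro hC G' hG' hPP
    exact mpr_direction A G hG hC G' hG' hPP
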